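/- Let S ≥ 0 be a bounded operator on H, K a closed subspace, and Ω = {f ∈ closure(ran S) : S^{1/2} f ∈ K}. Then the shorted operator satisfies S_K = S^{1/2} P_Ω S^{1/2}, where P_Ω is the orthogonal projection onto Ω. -/

import Mathlib

open ContinuousLinearMap

variable {H : Type*} [NormedAddCommGroup H] [InnerProductSpace ℂ H] [CompleteSpace H]

/-- `W` is the Kreĭn shorted operator of `S` with respect to the closed subspace `K`. -/
def IsShortedOp (S W : H →L[ℂ] H) (K : Submodule ℂ H) : Prop :=
  IsSelfAdjoint W ∧
    ∀ f : H, (inner ℂ (W f) f : ℂ).re = ⨅ φ : Kᗮ, (inner ℂ (S (f + φ)) (f + φ) : ℂ).re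
/-- Let `S ≥ 0`, `R = S^{1/2}` its positive square root, `K` a closed
subspace and `Ω = {f ∈ closure(ran S) : S^{1/2} f ∈ K}`. Then the shorted operator
satisfies `S_K = S^{1/2} P_Ω S^{1/2}`, where `P_Ω` is the orthogonal projection onto
`Ω` (characterized by `P = id` on `Ω` and `P = 0` on `Ωᗮ`). -/
theorem shorted_eq_sqrt_proj_sqrt (S R : H →L[ℂ] H)
    (hS : S.IsPositive) (hR : R.IsPositive) (hR2 : R ∘L R = S)
    (K : Submodule ℂ H) (hK : IsClosed (K : Set H))
    (Ω : Submodule ℂ H)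
    (hΩ : Ω = (LinearMap.range (S : H →ₗ[ℂ] H)).topologicalClosure ⊓
      Submodule.comap (R : H →ₗ[ℂ] H) K)
    (P : H →L[ℂ] H) (hP₁ : ∀ x ∈ Ω, P x = x) (hP₂ : ∀ x ∈ Ωᗮ, P x = 0)
    (W : H →L[ℂ] H) (hW : IsShortedOp S W K) :
    W = R ∘L P ∘L R := by
  classical
  have hRsa : IsSelfAdjoint R := hR.isSelfAdjoint
  have hRip : ∀ x y : H, (inner ℂ (R x) y : ℂ) = inner ℂ x (R y) := by
    intro x y
    conv_lhs => rw [← hRsa.adjoint_eq]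
    exact ContinuousLinearMap.adjoint_inner_left R y x
  set M : Submodule ℂ H := (LinearMap.range (S : H →ₗ[ℂ] H)).topologicalClosure with hM
  have hMclosed : IsClosed (M : Set H) := Submodule.isClosed_topologicalClosure _
  haveI : CompleteSpace M := hMclosed.completeSpace_coe
  have hSM : ∀ g : H, S g ∈ M := fun g =>
    Submodule.le_topologicalClosure _ ⟨g, rfl⟩
  -- every vector in the range of R lies in M
  have hRM : ∀ x : H, R x ∈ M := by
    intro x
    set m : H := (Submodule.orthogonalProjectionOnto M (R x) : H) with hm
    have hmM : m ∈ M := SetLike.coe_mem _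
    have hw : R x - m ∈ Mᗮ := Submodule.sub_starProjection_mem_orthogonal (K := M) (R x)
    set w : H := R x - m with hwdef
    have h1 : (inner ℂ (S w) w : ℂ) = 0 := by
      have := (Submodule.mem_orthogonal M w).1 hw (S w) (hSM w)
      simpa using this
    have h2 : (inner ℂ (R w) (R w) : ℂ) = 0 := by
      have hs : S w = R (R w) := by rw [← hR2]; rfl
      rw [← hRip (R w) w, ← hs]
      exact h1
    have hRw : R w = 0 := by rwa [inner_self_eq_zero] at h2
    have h3 : (inner ℂ w (R x) : ℂ) = 0 := by
      rw [← hRip, hRw, inner_zero_left]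
    have h4 : (inner ℂ w m : ℂ) = 0 := by
      have := (Submodule.mem_orthogonal M w).1 hw m hmM
      rw [← inner_conj_symm, this, map_zero]
    have hww : (inner ℂ w w : ℂ) = 0 := by
      rw [hwdef, inner_sub_right, ← hwdef, h3, h4, sub_zero]
    have : w = 0 := inner_self_eq_zero.1 hww
    have : R x = m := by
      have := sub_eq_zero.1 this
      simpa [hwdef] using this
    rw [this]; exact hmM
  -- basic facts about Ω
  have hΩM : Ω ≤ M := by rw [hΩ]; exact inf_le_left
  have hΩK : ∀ x ∈ Ω, R x ∈ K := by
    intro x hx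
    rw [hΩ] at hx
    exact hx.2
  have hΩmem : ∀ x : H, x ∈ M → R x ∈ K → x ∈ Ω := by
    intro x h1 h2
    rw [hΩ]
    exact ⟨h1, h2⟩
  have hΩclosed : IsClosed (Ω : Set H) := by
    have : (Ω : Set H) = (M : Set H) ∩ (R ⁻¹' (K : Set H)) := by
      rw [hΩ]; rfl
    rw [this]
    exact hMclosed.inter (hK.preimage R.continuous)
  haveI : CompleteSpace Ω := hΩclosed.completeSpace_coe
  -- P is the orthogonal projection onto Ω
  have hP : ∀ g : H, P g = (Submodule.orthogonalProjectionOnto Ω g : H) := by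
    intro g
    have h1 : g - (Submodule.orthogonalProjectionOnto Ω g : H) ∈ Ωᗮ :=
      Submodule.sub_starProjection_mem_orthogonal (K := Ω) g
    have : P g = P ((Submodule.orthogonalProjectionOnto Ω g : H)) + P (g - (Submodule.orthogonalProjectionOnto Ω g : H)) := by
      rw [← map_add, add_sub_cancel]
    rw [this, hP₁ _ (SetLike.coe_mem _), hP₂ _ h1, add_zero]
  have hPmem : ∀ g : H, P g ∈ Ω := fun g => by rw [hP]; exact SetLike.coe_mem _
  have hgP : ∀ g : H, g - P g ∈ Ωᗮ := fun g => by
    rw [hP]; exact Submodule.sub_starProjection_mem_orthogonal (K := Ω) g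
  -- R maps K⊥ into Ω⊥
  have hRφΩ : ∀ φ ∈ Kᗮ, R φ ∈ Ωᗮ := by
    intro φ hφ
    rw [Submodule.mem_orthogonal]
    intro u hu
    rw [← hRip]
    exact hφ (R u) (hΩK u hu)
  -- quadratic form of R P R
  have hQuad : ∀ x : H, (inner ℂ ((R ∘L P ∘L R) x) x : ℂ) =
      ((‖P (R x)‖ * ‖P (R x)‖ : ℝ) : ℂ) := by
    intro x
    have h0 : ((R ∘L P ∘L R) x) = R (P (R x)) := rfl
    rw [h0, hRip]
    have hdec : (inner ℂ (P (R x)) (R x) : ℂ) =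
        inner ℂ (P (R x)) (P (R x)) + inner ℂ (P (R x)) (R x - P (R x)) := by
      rw [← inner_add_right, add_sub_cancel]
    have hz : (inner ℂ (P (R x)) (R x - P (R x)) : ℂ) = 0 :=
      (Submodule.mem_orthogonal Ω _).1 (hgP (R x)) (P (R x)) (hPmem (R x))
    rw [hdec, hz, add_zero, inner_self_eq_norm_sq_to_K]
    simp [pow_two]
  -- the value of the quadratic form of S
  have hSformC : ∀ g : H, (inner ℂ (S g) g : ℂ) = ((‖R g‖ * ‖R g‖ : ℝ) : ℂ) := by
    intro g
    have hs : S g = R (R g) := by rw [← hR2]; rfl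
    rw [hs, hRip, inner_self_eq_norm_sq_to_K]
    simp [pow_two]
  have hSform : ∀ g : H, (inner ℂ (S g) g : ℂ).re = ‖R g‖ * ‖R g‖ := by
    intro g
    rw [hSformC, Complex.ofReal_re]
  -- the closure of R K⊥
  set N : Submodule ℂ H := (Submodule.map (R : H →ₗ[ℂ] H) Kᗮ).topologicalClosure with hN
  have hNclosed : IsClosed (N : Set H) := Submodule.isClosed_topologicalClosure _
  haveI : CompleteSpace N := hNclosed.completeSpace_coe
  have hNM : N ≤ M := by
    refine Submodule.topologicalClosure_minimal _ ?_ hMclosed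
    rintro _ ⟨φ, -, rfl⟩
    exact hRM φ
  haveI : CompleteSpace K := hK.completeSpace_coe
  -- the key fact : R f - P (R f) ∈ N
  have hhard : ∀ f : H, R f - P (R f) ∈ N := by
    intro f
    set h : H := R f - P (R f) with hhdef
    have hhM : h ∈ M := Submodule.sub_mem M (hRM f) (hΩM (hPmem (R f)))
    have hhΩ : h ∈ Ωᗮ := hgP (R f)
    set h₁ : H := (Submodule.orthogonalProjectionOnto N h : H) with hh₁
    have hh₁N : h₁ ∈ N := SetLike.coe_mem _
    have hh₂N : h - h₁ ∈ Nᗮ := Submodule.sub_starProjection_mem_orthogonal (K := N) h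
    set h₂ : H := h - h₁ with hh₂
    -- h₂ ∈ Ω
    have hh₂Ω : h₂ ∈ Ω := by
      apply hΩmem
      · exact Submodule.sub_mem M hhM (hNM hh₁N)
      · -- R h₂ ∈ K
        have hKK : Kᗮᗮ = K := Submodule.orthogonal_orthogonal K
        rw [← hKK, Submodule.mem_orthogonal]
        intro u hu
        have hmem : R u ∈ Submodule.map (R : H →ₗ[ℂ] H) Kᗮ := ⟨u, hu, rfl⟩
        have := (Submodule.mem_orthogonal N h₂).1 hh₂N (R u)
          (Submodule.le_topologicalClosure _ hmem)
        rw [hRip] at this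
        exact this
    -- h₂ = 0
    have hz1 : (inner ℂ h₂ h : ℂ) = 0 :=
      (Submodule.mem_orthogonal Ω h).1 hhΩ h₂ hh₂Ω
    have hz2 : (inner ℂ h₂ h₁ : ℂ) = 0 := by
      have := (Submodule.mem_orthogonal N h₂).1 hh₂N h₁ hh₁N
      rw [← inner_conj_symm, this, map_zero]
    have hz : (inner ℂ h₂ h₂ : ℂ) = 0 := by
      rw [hh₂, inner_sub_right, ← hh₂, hz1, hz2, sub_zero]
    have h₂0 : h₂ = 0 := inner_self_eq_zero.1 hz
    have : h = h₁ := by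
      have := sub_eq_zero.1 h₂0
      simpa [hh₂] using this
    rw [this]
    exact hh₁N
  -- equality of quadratic forms
  have key : ∀ f : H, (inner ℂ (W f) f : ℂ) = inner ℂ ((R ∘L P ∘L R) f) f := by
    intro f
    set a : ℝ := ‖P (R f)‖ with ha
    have ha0 : 0 ≤ a := norm_nonneg _
    have hval : ∀ φ : Kᗮ, (inner ℂ (S (f + φ)) (f + φ) : ℂ).re =
        ‖R (f + φ)‖ * ‖R (f + φ)‖ := fun φ => hSform (f + φ)
    -- lower bound
    have hlb : ∀ φ : Kᗮ, a * a ≤ ‖R (f + (φ : H))‖ * ‖R (f + (φ : H))‖ := by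
      intro φ
      have hsplit : R (f + (φ : H)) = P (R f) + ((R f - P (R f)) + R φ) := by
        rw [map_add]; abel
      have hperp : ((R f - P (R f)) + R φ) ∈ Ωᗮ :=
        Submodule.add_mem _ (hgP (R f)) (hRφΩ φ (SetLike.coe_mem φ))
      have hz : (inner ℂ (P (R f)) ((R f - P (R f)) + R φ) : ℂ) = 0 :=
        (Submodule.mem_orthogonal Ω _).1 hperp (P (R f)) (hPmem (R f))
      have := norm_add_sq_eq_norm_sq_add_norm_sq_of_inner_eq_zero _ _ hz
      rw [hsplit, this]
      nlinarith [norm_nonneg ((R f - P (R f)) + R φ)]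
    -- upper bound
    have hub : ∀ ε : ℝ, 0 < ε → ∃ φ : Kᗮ,
        ‖R (f + (φ : H))‖ * ‖R (f + (φ : H))‖ ≤ a * a + ε := by
      intro ε hε
      set δ : ℝ := min 1 (ε / (2 * a + 1)) with hδdef
      have hδ0 : 0 < δ := lt_min one_pos (div_pos hε (by linarith))
      have hδ1 : δ ≤ 1 := min_le_left _ _
      have h2a : (0:ℝ) < 2 * a + 1 := by linarith
      have hδ2 : δ * (2 * a + 1) ≤ ε := by
        have hδle : δ ≤ ε / (2 * a + 1) := min_le_right _ _
        have := mul_le_mul_of_nonneg_right hδle (le_of_lt h2a)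
        rwa [div_mul_cancel₀ _ (ne_of_gt h2a)] at this
      have hcl : R f - P (R f) ∈ closure ((Submodule.map (R : H →ₗ[ℂ] H) Kᗮ : Set H)) := by
        have h0 := hhard f
        rw [hN, ← SetLike.mem_coe, Submodule.topologicalClosure_coe] at h0
        exact h0
      obtain ⟨b, hb, hdist⟩ := Metric.mem_closure_iff.1 hcl δ hδ0
      obtain ⟨φ, hφK, rfl⟩ := hb
      refine ⟨⟨-φ, neg_mem hφK⟩, ?_⟩
      have hre : R (f + (-φ)) = P (R f) + ((R f - P (R f)) - R φ) := by
        rw [map_add, map_neg]; abel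
      have hdn : ‖(R f - P (R f)) - R φ‖ < δ := by
        rwa [← dist_eq_norm]
      have hle : ‖R (f + (-φ : H))‖ ≤ a + δ := by
        rw [hre]
        calc ‖P (R f) + ((R f - P (R f)) - R φ)‖ ≤ ‖P (R f)‖ + ‖(R f - P (R f)) - R φ‖ :=
              norm_add_le _ _
          _ ≤ a + δ := by rw [← ha]; linarith
      have hn0 : (0:ℝ) ≤ ‖R (f + (-φ : H))‖ := norm_nonneg _
      push_cast
      nlinarith
    -- the infimum equals a * a
    have hInf : (⨅ φ : Kᗮ, (inner ℂ (S (f + φ)) (f + φ) : ℂ).re) = a * a := by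
      have hbdd : BddBelow (Set.range fun φ : Kᗮ => (inner ℂ (S (f + φ)) (f + φ) : ℂ).re) := by
        refine ⟨0, ?_⟩
        rintro x ⟨φ, rfl⟩
        dsimp only
        rw [hval]
        positivity
      apply le_antisymm
      · by_contra hcon
        push_neg at hcon
        set I : ℝ := ⨅ φ : Kᗮ, (inner ℂ (S (f + φ)) (f + φ) : ℂ).re with hI
        obtain ⟨φ, hφ⟩ := hub ((I - a * a) / 2) (by linarith)
        have h1 : I ≤ (inner ℂ (S (f + φ)) (f + φ) : ℂ).re := ciInf_le hbdd φ
        have h1' := h1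
        rw [hval φ] at h1'
        linarith
      · refine le_ciInf fun φ => ?_
        rw [hval φ]
        exact hlb φ
    -- real parts agree
    have hre : (inner ℂ (W f) f : ℂ).re = (inner ℂ ((R ∘L P ∘L R) f) f : ℂ).re := by
      rw [hW.2 f, hInf, hQuad]
      simp [ha]
    -- both inner ℂ products are real
    have him1 : (inner ℂ (W f) f : ℂ).im = 0 := by
      have hWsa : IsSelfAdjoint W := hW.1
      have h1 : (starRingEnd ℂ) (inner ℂ (W f) f) = inner ℂ (W f) f := by
        rw [inner_conj_symm]
        conv_lhs => rw [← hWsa.adjoint_eq]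
        exact ContinuousLinearMap.adjoint_inner_right W f f
      exact Complex.conj_eq_iff_im.1 h1
    have him2 : (inner ℂ ((R ∘L P ∘L R) f) f : ℂ).im = 0 := by
      rw [hQuad]
      simp
    exact Complex.ext hre (by rw [him1, him2])
  have := (ext_inner_map (W : H →ₗ[ℂ] H) ((R ∘L P ∘L R : H →L[ℂ] H) : H →ₗ[ℂ] H)).1 key
  exact ContinuousLinearMap.coe_injective this
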